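/- Let q be a prime power and n ≥ 1. For any nontrivial multiplicative character χ of F_{q^n} (extended by χ(0)=0) and any F_q-affine subspace A ⊆ F_{q^n} of dimension t ≥ 0, we have |∑_{x ∈ A} χ(x)| ≤ q^{min(t, n/2)}. -/

import Mathlib

open scoped Classical BigOperators

noncomputable section

/-- `A ⊆ F` is an `K`-affine subspace of dimension `t`: a coset `u + V` of a
`t`-dimensional `K`-linear subspace `V`. -/
def IsAffineSubspaceOfDim (K : Type*) {F : Type*} [Field K] [Field F] [Algebra K F]
    (t : ℕ) (A : Set F) : Prop :=
  ∃ (u : F) (V : Submodule K F), Module.finrank K ↥V = t ∧ A = {x | x - u ∈ V}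

/-- A family of `n` affine hyperplanes in general position: any `k ≥ 1` of them
intersect in an affine space of dimension `n - k`. -/
def InGeneralPosition (K : Type*) {F : Type*} [Field K] [Field F] [Algebra K F]
    (n : ℕ) (A : Fin n → Set F) : Prop :=
  ∀ s : Finset (Fin n), s.Nonempty →
    IsAffineSubspaceOfDim K (n - s.card) (⋂ i ∈ s, A i)

/-- `x` is a primitive element of the finite field `F`, i.e. a generator of `Fˣ`. -/
def IsPrimitive {F : Type*} [Field F] [Fintype F] (x : F) : Prop :=
  orderOf x = Fintype.card F - 1

/-- `W t`: the number of squarefree divisors of `t`. -/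
def sqfDivisors (t : ℕ) : ℕ := (t.divisors.filter Squarefree).card

/-- `δ(q, n) = ∑_{i=0}^{n-1} C(n,i) q^{min(i, n/2)}`. -/
def deltaQN (q n : ℕ) : ℝ :=
  ∑ i ∈ Finset.range n, (n.choose i : ℝ) * (q : ℝ) ^ (min (i : ℝ) ((n : ℝ) / 2))

section Aux
variable {F : Type} [Field F] [Fintype F]

lemma aux_addChar_abs (ψ : AddChar F ℂ) (x : F) : ‖ψ x‖ = 1 := by
  refine Complex.norm_eq_one_of_pow_eq_one (n := Fintype.card F) ?_ Fintype.card_ne_zero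
  rw [← AddChar.map_nsmul_eq_pow, card_nsmul_eq_zero, AddChar.map_zero_eq_one]

lemma aux_conj_addChar (ψ : AddChar F ℂ) (a : F) : (starRingEnd ℂ) (ψ a) = ψ (-a) := by
  have hchar : 0 < ringChar F := Nat.pos_of_ne_zero (CharP.ringChar_ne_zero_of_finite F)
  rw [AddChar.starComp_apply hchar, AddChar.inv_apply]

lemma aux_mulChar_abs (χ : MulChar F ℂ) {x : F} (hx : IsUnit x) : ‖χ x‖ = 1 := by
  refine Complex.norm_eq_one_of_pow_eq_one (n := Fintype.card Fˣ) ?_ Fintype.card_ne_zero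
  rw [← map_pow]
  have h2 : x ^ Fintype.card Fˣ = 1 := by
    have h1 : hx.unit ^ Fintype.card Fˣ = 1 := pow_card_eq_one
    calc x ^ Fintype.card Fˣ = ((hx.unit ^ Fintype.card Fˣ : Fˣ) : F) := by
          rw [Units.val_pow_eq_pow_val, hx.unit_spec]
    _ = 1 := by rw [h1]; rfl
  rw [h2, map_one]

lemma aux_mulChar_abs_le (χ : MulChar F ℂ) (x : F) : ‖χ x‖ ≤ 1 := by
  by_cases hx : IsUnit x
  · exact (aux_mulChar_abs χ hx).le
  · rw [χ.map_nonunit hx]; simp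

lemma aux_gauss_abs {χ : MulChar F ℂ} (hχ : χ ≠ 1) {ψ : AddChar F ℂ}
    (hψ : ψ.IsPrimitive) :
    ‖gaussSum χ ψ‖ = Real.sqrt (Fintype.card F) := by
  have hchar : 0 < ringChar F := Nat.pos_of_ne_zero (CharP.ringChar_ne_zero_of_finite F)
  have hconj : (starRingEnd ℂ) (gaussSum χ ψ) = gaussSum χ⁻¹ ψ⁻¹ := by
    unfold gaussSum
    rw [map_sum]
    refine Finset.sum_congr rfl fun a _ => ?_
    rw [map_mul, ← AddChar.starComp_apply hchar, ← MulChar.star_apply' χ a]; rfl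
  have h2 : (‖gaussSum χ ψ‖) ^ 2 = Fintype.card F := by
    have := gaussSum_mul_gaussSum_eq_card hχ hψ
    rw [← hconj, Complex.mul_conj] at this
    have := congrArg Complex.re this
    simpa [Complex.sq_norm] using this
  rw [← h2, Real.sqrt_sq (norm_nonneg _)]
end Aux

theorem charSum_affine_bound (q n t : ℕ) (hq : IsPrimePow q) (hn : 1 ≤ n)
    (K F : Type) [Field K] [Field F] [Algebra K F] [Fintype K] [Fintype F]
    (hK : Fintype.card K = q) (hd : Module.finrank K F = n)
    (χ : MulChar F ℂ) (hχ : χ ≠ 1)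
    (A : Set F) (hA : IsAffineSubspaceOfDim K t A) :
    ‖∑ x ∈ Finset.univ.filter (· ∈ A), χ x‖
      ≤ (q : ℝ) ^ (min (t : ℝ) ((n : ℝ) / 2)) := by
  obtain ⟨u, V, hV, hAeq⟩ := hA
  have hq0 : 0 < q := hq.pos
  have hmemA : ∀ x : F, x ∈ A ↔ x - u ∈ V := fun x => by rw [hAeq]; rfl
  set T : Finset F := Finset.univ.filter (· ∈ A) with hT
  have hmemT : ∀ x : F, x ∈ T ↔ x - u ∈ V := fun x => by
    simp [hT, hmemA x]
  have hcardF : (Fintype.card F) = q ^ n := by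
    rw [← hK, ← hd]; exact Module.card_eq_pow_finrank
  have hcardV : (Fintype.card V) = q ^ t := by
    rw [← hK, ← hV]; exact Module.card_eq_pow_finrank
  have hcardT : T.card = q ^ t := by
    rw [← hcardV, ← Fintype.card_coe T]
    refine Fintype.card_congr ⟨fun x => ⟨(x : F) - u, (hmemT x).1 x.2⟩,
      fun v => ⟨(v : F) + u, (hmemT _).2 (by simpa using v.2)⟩, ?_, ?_⟩
    · intro x; ext; simp
    · intro v; ext; simp
  -- trivial bound
  have bound1 : ‖∑ x ∈ T, χ x‖ ≤ (q : ℝ) ^ t := by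
    calc ‖∑ x ∈ T, χ x‖ ≤ ∑ x ∈ T, ‖χ x‖ :=
          norm_sum_le _ _
    _ ≤ ∑ _x ∈ T, 1 := Finset.sum_le_sum fun x _ => aux_mulChar_abs_le χ x
    _ = (T.card : ℝ) := by simp
    _ = (q : ℝ) ^ t := by rw [hcardT]; push_cast; ring
  -- Gauss-sum bound
  have bound2 : ‖∑ x ∈ T, χ x‖ ≤ Real.sqrt (Fintype.card F) := by
    set ψ := AddChar.FiniteField.primitiveChar_to_Complex F with hψdef
    have hψ : ψ.IsPrimitive := AddChar.FiniteField.primitiveChar_to_Complex_isPrimitive F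
    set N : ℕ := Fintype.card F with hN
    set M : ℕ := Fintype.card V with hM
    have hM0 : (0:ℝ) < M := by positivity
    have hN0 : (0:ℝ) < N := by positivity
    have horto : ∀ c : F, ∑ b : F, ψ (b * c) = if c = 0 then (N : ℂ) else 0 := fun c => by
      simpa using AddChar.sum_mulShift c hψ
    set G : F → ℂ := fun b => ∑ x : F, χ x * ψ (b * x) with hG
    have hGabs : ∀ b, ‖G b‖ ≤ Real.sqrt N := by
      intro b
      by_cases hb : b = 0
      · simp [hG, hb, ← Finset.sum_mul, MulChar.sum_eq_zero_of_ne_one hχ, Real.sqrt_nonneg]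
      · have h1 : χ b * G b = gaussSum χ ψ := by
          have := gaussSum_mulShift χ ψ (Units.mk0 b hb)
          simpa [AddChar.mulShift_apply, gaussSum, hG] using this
        have h2 := congrArg (‖·‖) h1
        rw [norm_mul, aux_mulChar_abs χ (IsUnit.mk0 b hb), one_mul, aux_gauss_abs hχ hψ] at h2
        exact h2.le
    set c : F → ℂ := fun b => ∑ v : V, ψ (-(b * (v : F))) with hc
    -- each |c b| is 0 or M
    have hcval : ∀ b, c b = 0 ∨ c b = (M : ℂ) := by
      intro b
      set f : V →+ F := AddMonoidHom.mk' (fun v => -(b * (v : F))) (fun v w => by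
        push_cast; ring) with hf
      set φ : AddChar V ℂ := ψ.compAddMonoidHom f with hφ
      have hcb : c b = ∑ v : V, φ v := rfl
      by_cases h1 : φ = 1
      · right; rw [hcb, AddChar.sum_eq_card_of_eq_one h1]
      · left; rw [hcb, AddChar.sum_eq_zero_of_ne_one h1]
    have hconj_c : ∀ b, (starRingEnd ℂ) (c b) = ∑ w : V, ψ (b * (w : F)) := by
      intro b
      rw [map_sum]
      exact Finset.sum_congr rfl fun w _ => by rw [aux_conj_addChar, neg_neg]
    -- ∑ b, |c b|² = M * N
    have hsum_sq : ∑ b : F, (Complex.normSq (c b) : ℂ) = (M : ℂ) * N := by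
      have : ∀ b : F, (Complex.normSq (c b) : ℂ)
          = ∑ v : V, ∑ w : V, ψ (b * ((w : F) - (v : F))) := by
        intro b
        rw [← Complex.mul_conj, hconj_c, hc, Finset.sum_mul_sum]
        refine Finset.sum_congr rfl fun v _ => Finset.sum_congr rfl fun w _ => ?_
        rw [← AddChar.map_add_eq_mul]; ring_nf
      rw [Finset.sum_congr rfl fun b _ => this b]
      rw [Finset.sum_comm]
      have : ∀ v : V, ∑ b : F, ∑ w : V, ψ (b * ((w : F) - (v : F))) = (N : ℂ) := by
        intro v
        rw [Finset.sum_comm]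
        have : ∀ w : V, ∑ b : F, ψ (b * ((w : F) - (v : F)))
            = if w = v then (N : ℂ) else 0 := by
          intro w
          rw [horto]
          congr 1
          rw [sub_eq_zero]; exact propext Subtype.coe_inj
        rw [Finset.sum_congr rfl fun w _ => this w, Finset.sum_ite_eq' Finset.univ v
          (fun _ => (N : ℂ))]
        simp
      rw [Finset.sum_congr rfl fun v _ => this v]
      simp [hM, mul_comm]
    -- ∑ b, |c b| = N
    have habs_c : ∑ b : F, ‖c b‖ = (N : ℝ) := by
      have h1 : ∀ b, Complex.normSq (c b) = (M : ℝ) * ‖c b‖ := by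
        intro b
        rcases hcval b with h | h
        · simp [h]
        · rw [h, ← Complex.sq_norm, Complex.norm_natCast]; ring
      have h2 : ∑ b : F, Complex.normSq (c b) = (M : ℝ) * N := by
        have h3 := congrArg Complex.re hsum_sq
        simpa using h3
      rw [Finset.sum_congr rfl fun b _ => h1 b, ← Finset.mul_sum] at h2
      exact mul_left_cancel₀ (ne_of_gt hM0) h2
    -- indicator identity
    have hind : ∀ x : F, ∑ v : V, (if x - u - (v : F) = 0 then (N : ℂ) else 0)
        = if x ∈ T then (N : ℂ) else 0 := by
      intro x
      by_cases hx : x ∈ T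
      · rw [if_pos hx]
        have hxu : x - u ∈ V := (hmemT x).1 hx
        have heq : ∀ v : V, (if x - u - (v : F) = 0 then (N : ℂ) else 0)
            = if v = (⟨x - u, hxu⟩ : V) then (N : ℂ) else 0 := by
          intro v
          refine if_congr ?_ rfl rfl
          rw [sub_eq_zero, eq_comm]
          exact Iff.symm Subtype.ext_iff
        rw [Finset.sum_congr rfl fun v _ => heq v,
          Finset.sum_ite_eq' Finset.univ (⟨x - u, hxu⟩ : ↥V) (fun _ => (N : ℂ))]
        simp
      · rw [if_neg hx]
        refine Finset.sum_eq_zero fun v _ => ?_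
        rw [if_neg]
        intro h
        apply hx
        rw [hmemT]
        rw [sub_sub, sub_eq_zero] at h
        have : x - u = u + ((v : F)) - u + 0 := by rw [h]; ring
        simpa [this] using v.2
    -- main Fourier identity
    have main : (N : ℂ) * (∑ x ∈ T, χ x) = ∑ b : F, c b * (ψ (-(b * u)) * G b) := by
      have rhs1 : ∀ b : F, c b * (ψ (-(b * u)) * G b)
          = ∑ v : V, ∑ x : F, χ x * ψ (b * (x - u - (v : F))) := by
        intro b
        rw [hc]
        rw [Finset.sum_mul]
        refine Finset.sum_congr rfl fun v _ => ?_
        rw [hG, Finset.mul_sum, Finset.mul_sum]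
        refine Finset.sum_congr rfl fun x _ => ?_
        have harg : b * (x - u - (v : F)) = b * x + (-(b * u) + -(b * (v : F))) := by ring
        rw [harg, AddChar.map_add_eq_mul, AddChar.map_add_eq_mul]
        ring
      calc (N : ℂ) * (∑ x ∈ T, χ x)
          = ∑ x : F, χ x * (if x ∈ T then (N : ℂ) else 0) := by
            simp only [mul_ite, mul_zero, Finset.sum_ite_mem, Finset.univ_inter]
            rw [Finset.mul_sum]
            exact Finset.sum_congr rfl fun x _ => by ring
        _ = ∑ x : F, χ x * ∑ v : V, (if x - u - (v : F) = 0 then (N : ℂ) else 0) := by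
            exact Finset.sum_congr rfl fun x _ => by rw [hind x]
        _ = ∑ x : F, ∑ v : V, ∑ b : F, χ x * ψ (b * (x - u - (v : F))) := by
            refine Finset.sum_congr rfl fun x _ => ?_
            rw [Finset.mul_sum]
            refine Finset.sum_congr rfl fun v _ => ?_
            rw [← Finset.mul_sum, horto]
        _ = ∑ v : V, ∑ x : F, ∑ b : F, χ x * ψ (b * (x - u - (v : F))) := Finset.sum_comm
        _ = ∑ v : V, ∑ b : F, ∑ x : F, χ x * ψ (b * (x - u - (v : F))) :=
            Finset.sum_congr rfl fun v _ => Finset.sum_comm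
        _ = ∑ b : F, ∑ v : V, ∑ x : F, χ x * ψ (b * (x - u - (v : F))) := Finset.sum_comm
        _ = ∑ b : F, c b * (ψ (-(b * u)) * G b) := by
            exact Finset.sum_congr rfl fun b _ => (rhs1 b).symm
    have key : ‖(N : ℂ) * ∑ x ∈ T, χ x‖ ≤ (N : ℝ) * Real.sqrt N := by
      rw [main]
      calc ‖∑ b : F, c b * (ψ (-(b * u)) * G b)‖
          ≤ ∑ b : F, ‖c b * (ψ (-(b * u)) * G b)‖ := norm_sum_le _ _
        _ ≤ ∑ b : F, ‖c b‖ * Real.sqrt N := by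
            refine Finset.sum_le_sum fun b _ => ?_
            rw [norm_mul, norm_mul, aux_addChar_abs, one_mul]
            exact mul_le_mul_of_nonneg_left (hGabs b) (norm_nonneg _)
        _ = (N : ℝ) * Real.sqrt N := by rw [← Finset.sum_mul, habs_c]
    rw [norm_mul, Complex.norm_natCast] at key
    exact le_of_mul_le_mul_left key hN0
  -- conclude
  rcases le_total (t : ℝ) ((n : ℝ) / 2) with h | h
  · rw [min_eq_left h, Real.rpow_natCast]
    exact bound1
  · rw [min_eq_right h]
    have hs : (q : ℝ) ^ ((n : ℝ) / 2) = Real.sqrt (Fintype.card F) := by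
      rw [hcardF]
      push_cast
      rw [Real.sqrt_eq_rpow, ← Real.rpow_natCast (q : ℝ) n, ← Real.rpow_mul (by positivity)]
      congr 1; ring
    rw [hs]
    exact bound2
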